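/- For 1 ≤ s ≤ m and 1 ≤ k ≤ n, the weighted sum F_{s,k} over Up-Right lattice paths from (m,1) to (s,k) of the product of 1/(x_i+y_j) over visited cells (i,j) is a symmetric function of the variables y_1, y_2, ..., y_k. -/

import Mathlib

open Finset

noncomputable section

/-- The field of rational functions over `ℚ` in variables `x_1, x_2, …` and `y_1, y_2, …`. -/
abbrev K : Type := FractionRing (MvPolynomial (ℕ ⊕ ℕ) ℚ)

/-- The variable `x_i` as an element of `K`. -/
def X (i : ℕ) : K := algebraMap (MvPolynomial (ℕ ⊕ ℕ) ℚ) K (MvPolynomial.X (Sum.inl i))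

/-- The variable `y_j` as an element of `K`. -/
def Y (j : ℕ) : K := algebraMap (MvPolynomial (ℕ ⊕ ℕ) ℚ) K (MvPolynomial.X (Sum.inr j))

/-- A step of an Up-Right lattice path: `Up` decreases the first (row) coordinate by one,
`Right` increases the second (column) coordinate by one. -/
def Step (c d : ℕ × ℕ) : Prop :=
  (d.1 + 1 = c.1 ∧ d.2 = c.2) ∨ (d.1 = c.1 ∧ d.2 = c.2 + 1)

/-- `p` is an Up-Right lattice path from cell `A` to cell `B` (listed as its sequence of
visited cells, starting at `A` and ending at `B`). -/
def IsPath (A B : ℕ × ℕ) (p : List (ℕ × ℕ)) : Prop :=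
  p.Chain' Step ∧ p.head? = some A ∧ p.getLast? = some B

/-- All cells of `p` lie in the grid `{1,…,m} × {1,…,n}`. -/
def InGrid (m n : ℕ) (p : List (ℕ × ℕ)) : Prop :=
  ∀ c ∈ p, 1 ≤ c.1 ∧ c.1 ≤ m ∧ 1 ≤ c.2 ∧ c.2 ≤ n

/-- The weight of a path: the product of `1/(x_i + y_j)` over all visited cells `(i,j)`. -/
def pathWeight (x y : ℕ → K) (p : List (ℕ × ℕ)) : K :=
  (p.map fun c => (x c.1 + y c.2)⁻¹).prod

/-- The single-path partition function: the sum of weights of all Up-Right lattice paths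
from `A` to `B` inside the grid `{1,…,m} × {1,…,n}`. -/
def F1 (m n : ℕ) (x y : ℕ → K) (A B : ℕ × ℕ) : K :=
  ∑ᶠ p : {p : List (ℕ × ℕ) // IsPath A B p ∧ InGrid m n p}, pathWeight x y p.1

/-- `γ` is a `k`-tuple of pairwise vertex-disjoint Up-Right lattice paths `γ i : A i → B i`
inside the grid `{1,…,m} × {1,…,n}`. -/
def IsTuple (m n k : ℕ) (A B : Fin k → ℕ × ℕ) (γ : Fin k → List (ℕ × ℕ)) : Prop :=
  (∀ i, IsPath (A i) (B i) (γ i) ∧ InGrid m n (γ i)) ∧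
  (∀ i j, i ≠ j → ∀ c ∈ γ i, c ∉ γ j)

/-- The multi-path partition function: the sum, over all `k`-tuples of pairwise disjoint
Up-Right lattice paths `γ i : A i → B i` in the grid `{1,…,m} × {1,…,n}`, of the product
of `1/(x_i + y_j)` over all visited cells. -/
def Ftuple (m n k : ℕ) (x y : ℕ → K) (A B : Fin k → ℕ × ℕ) : K :=
  ∑ᶠ γ : {γ : Fin k → List (ℕ × ℕ) // IsTuple m n k A B γ}, ∏ i, pathWeight x y (γ.1 i)

-- ## Part 1 : combinatorics of paths

def phi (c : ℕ × ℕ) : ℤ := (c.2 : ℤ) - c.1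

lemma step_phi {c d} (h : Step c d) : phi d = phi c + 1 := by
  rcases h with ⟨h1, h2⟩ | ⟨h1, h2⟩ <;> simp only [phi] <;> omega

lemma path_length : ∀ {p : List (ℕ × ℕ)}, p.Chain' Step → ∀ {A B : ℕ × ℕ},
    p.head? = some A → p.getLast? = some B → (p.length : ℤ) = phi B - phi A + 1 := by
  intro p
  induction p with
  | nil => intro _ A B hA; simp at hA
  | cons a t ih =>
    intro hc A B hA hB
    cases t with
    | nil =>
      simp only [List.head?_cons, Option.some_inj] at hA
      simp only [List.getLast?_singleton, Option.some_inj] at hB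
      subst hA; subst hB; simp
    | cons b t' =>
      rw [List.Chain', List.isChain_cons_cons] at hc
      have hA' : a = A := by simpa using hA
      have hB' : (b :: t').getLast? = some B := by
        rwa [List.getLast?_cons_cons] at hB
      have h1 := ih hc.2 (A := b) (B := B) rfl hB'
      have h2 := step_phi hc.1
      subst hA'
      simp only [List.length_cons] at h1 ⊢
      push_cast at h1 ⊢
      omega

/-- the set of paths from `A` to `B` in the grid -/
def PS (m n : ℕ) (A B : ℕ × ℕ) : Set (List (ℕ × ℕ)) :=
  {p | IsPath A B p ∧ InGrid m n p}

lemma F1_eq_finsum_mem (m n : ℕ) (x y : ℕ → K) (A B : ℕ × ℕ) :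
    F1 m n x y A B = ∑ᶠ p ∈ PS m n A B, pathWeight x y p :=
  finsum_subtype_eq_finsum_cond _

lemma listSet_finite {α : Type*} (S : Set α) (hS : S.Finite) :
    ∀ N : ℕ, {l : List α | l.length ≤ N ∧ ∀ c ∈ l, c ∈ S}.Finite := by
  intro N
  induction N with
  | zero =>
    apply Set.Finite.subset (Set.finite_singleton ([] : List α))
    rintro l ⟨h1, _⟩
    simp [List.length_eq_zero_iff.1 (Nat.le_zero.1 h1)]
  | succ N ihN =>
    apply Set.Finite.subset ((Set.finite_singleton ([] : List α)).union
      (Set.Finite.image2 (fun a l => a :: l) hS ihN))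
    rintro l ⟨h1, h2⟩
    cases l with
    | nil => exact Or.inl rfl
    | cons a t =>
      refine Or.inr (Set.mem_image2_of_mem (h2 a (by simp)) ⟨?_, fun c hc => h2 c (by simp [hc])⟩)
      simpa using h1

lemma PS_finite (m n : ℕ) (A B : ℕ × ℕ) : (PS m n A B).Finite := by
  have hgrid : {c : ℕ × ℕ | 1 ≤ c.1 ∧ c.1 ≤ m ∧ 1 ≤ c.2 ∧ c.2 ≤ n}.Finite := by
    apply Set.Finite.subset (Set.finite_Icc ((1, 1) : ℕ × ℕ) (m, n))
    rintro c ⟨u1, u2, u3, u4⟩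
    simp [Set.mem_Icc, Prod.le_def, u1, u2, u3, u4]
  apply Set.Finite.subset (listSet_finite _ hgrid (phi B - phi A + 1).toNat)
  rintro p ⟨⟨hc, hA, hB⟩, hg⟩
  exact ⟨by have := path_length hc hA hB; omega, hg⟩

lemma PS_self (m n : ℕ) (A : ℕ × ℕ) (h1 : 1 ≤ A.1) (h2 : A.1 ≤ m) (h3 : 1 ≤ A.2)
    (h4 : A.2 ≤ n) : PS m n A A = {[A]} := by
  ext p
  constructor
  · rintro ⟨⟨hc, hA, hB⟩, hg⟩
    have hlen := path_length hc hA hB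
    have : p.length = 1 := by omega
    obtain ⟨a, rfl⟩ := List.length_eq_one_iff.1 this
    simp only [List.head?_cons, Option.some_inj] at hA
    simp [hA]
  · rintro rfl
    exact ⟨⟨List.isChain_singleton _, by simp, by simp⟩, by rintro c hc; simp at hc; subst hc; exact ⟨h1, h2, h3, h4⟩⟩

lemma PS_empty_of_not_grid (m n : ℕ) (A B : ℕ × ℕ)
    (h : ¬(1 ≤ B.1 ∧ B.1 ≤ m ∧ 1 ≤ B.2 ∧ B.2 ≤ n)) : PS m n A B = ∅ := by
  ext p
  simp only [Set.mem_empty_iff_false, iff_false]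
  rintro ⟨⟨hc, hA, hB⟩, hg⟩
  have : B ∈ p := by
    rcases List.mem_getLast?_eq_getLast hB with ⟨hne, rfl⟩
    exact List.getLast_mem hne
  exact h (hg B this)

/-- decomposition of the set of paths by removing the last cell -/
lemma PS_decomp (m n : ℕ) (s k : ℕ) (hs : 1 ≤ s) (hm : s ≤ m) (hk : 1 ≤ k) (hn : k ≤ n)
    (hne : (s, k) ≠ ((m, 1) : ℕ × ℕ)) :
    PS m n (m, 1) (s, k) =
      (fun q => q ++ [(s, k)]) '' (PS m n (m, 1) (s + 1, k) ∪ PS m n (m, 1) (s, k - 1)) := by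
  ext p
  constructor
  · rintro ⟨⟨hc, hA, hB⟩, hg⟩
    have hpne : p ≠ [] := by rintro rfl; simp at hA
    obtain ⟨hne', hBlast⟩ := List.mem_getLast?_eq_getLast hB
    have hp : p.dropLast ++ [(s, k)] = p := by rw [hBlast]; exact List.dropLast_append_getLast _
    set q := p.dropLast with hq
    have hqne : q ≠ [] := by
      rintro hq0
      rw [hq0, List.nil_append] at hp
      rw [← hp] at hA
      simp only [List.head?_cons, Option.some_inj] at hA
      exact hne (by rw [hA])
    rw [← hp] at hc
    rw [List.Chain', List.isChain_append] at hc
    obtain ⟨hcq, -, hstep⟩ := hc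
    obtain ⟨B', hB'⟩ := Option.ne_none_iff_exists'.1 (mt List.getLast?_eq_none_iff.1 hqne)
    have hstepB : Step B' (s, k) := hstep B' hB' (s, k) (by simp)
    have hqA : q.head? = some (m, 1) := by
      rw [← hp, List.head?_append_of_ne_nil _ hqne] at hA; exact hA
    have hqg : InGrid m n q := fun c hc' => hg c (by rw [← hp]; exact List.mem_append_left _ hc')
    refine ⟨q, ?_, hp⟩
    rcases hstepB with ⟨e1, e2⟩ | ⟨e1, e2⟩
    · left
      have : B' = (s + 1, k) := by
        have := Prod.ext_iff.1 (rfl : B' = B')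
        apply Prod.ext <;> simp at e1 e2 ⊢ <;> omega
      rw [← this]; exact ⟨⟨hcq, hqA, hB'⟩, hqg⟩
    · right
      have : B' = (s, k - 1) := by
        apply Prod.ext <;> simp at e1 e2 ⊢ <;> omega
      rw [← this]; exact ⟨⟨hcq, hqA, hB'⟩, hqg⟩
  · rintro ⟨q, hq, rfl⟩
    have hgB : (1:ℕ) ≤ s ∧ s ≤ m ∧ 1 ≤ k ∧ k ≤ n := ⟨hs, hm, hk, hn⟩
    have key : ∀ B' : ℕ × ℕ, Step B' (s, k) → q ∈ PS m n (m, 1) B' →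
        q ++ [(s, k)] ∈ PS m n (m, 1) (s, k) := by
      rintro B' hstep ⟨⟨hcq, hqA, hqB⟩, hqg⟩
      have hqne : q ≠ [] := by rintro rfl; simp at hqA
      refine ⟨⟨?_, ?_, ?_⟩, ?_⟩
      · rw [List.Chain', List.isChain_append]
        refine ⟨hcq, List.isChain_singleton _, ?_⟩
        intro a ha b hb
        rw [hqB] at ha
        simp only [Option.mem_def, Option.some_inj, List.head?_cons] at ha hb
        rw [← ha, ← hb]; exact hstep
      · rw [List.head?_append_of_ne_nil _ hqne]; exact hqA
      · simp
      · intro c hc'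
        rcases List.mem_append.1 hc' with h | h
        · exact hqg c h
        · simp only [List.mem_singleton] at h; subst h; exact hgB
    rcases hq with h | h
    · rcases h with ⟨⟨hcq, hqA, hqB⟩, hqg⟩
      have hq' : q ∈ PS m n (m,1) (s+1,k) := ⟨⟨hcq, hqA, hqB⟩, hqg⟩
      exact key (s+1,k) (Or.inl ⟨rfl, rfl⟩) hq'
    · rcases h with ⟨⟨hcq, hqA, hqB⟩, hqg⟩
      have hq' : q ∈ PS m n (m,1) (s,k-1) := ⟨⟨hcq, hqA, hqB⟩, hqg⟩
      have hk1 : k - 1 + 1 = k := by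
        -- if k = 0 impossible since hk
        omega
      exact key (s,k-1) (Or.inr ⟨rfl, hk1.symm⟩) hq'

lemma finsum_mem_mul_const {α : Type*} {s : Set α} (hs : s.Finite) (f : α → K) (c : K) :
    (∑ᶠ i ∈ s, f i * c) = (∑ᶠ i ∈ s, f i) * c := by
  rw [finsum_mem_eq_finite_toFinset_sum _ hs, finsum_mem_eq_finite_toFinset_sum _ hs,
    Finset.sum_mul]

lemma pathWeight_append (x y : ℕ → K) (q : List (ℕ × ℕ)) (c : ℕ × ℕ) :
    pathWeight x y (q ++ [c]) = pathWeight x y q * (x c.1 + y c.2)⁻¹ := by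
  simp [pathWeight]

lemma F1_base (m n : ℕ) (x y : ℕ → K) (hm : 1 ≤ m) (hn : 1 ≤ n) :
    F1 m n x y (m, 1) (m, 1) = (x m + y 1)⁻¹ := by
  rw [F1_eq_finsum_mem, PS_self m n (m,1) hm le_rfl le_rfl hn, finsum_mem_singleton]
  simp [pathWeight]

lemma F1_rec (m n : ℕ) (x y : ℕ → K) (s k : ℕ) (hs : 1 ≤ s) (hm : s ≤ m) (hk : 1 ≤ k)
    (hn : k ≤ n) (hne : (s, k) ≠ ((m, 1) : ℕ × ℕ)) :
    F1 m n x y (m, 1) (s, k) =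
      (x s + y k)⁻¹ * (F1 m n x y (m, 1) (s + 1, k) + F1 m n x y (m, 1) (s, k - 1)) := by
  have hdisj : Disjoint (PS m n (m, 1) (s + 1, k)) (PS m n (m, 1) (s, k - 1)) := by
    rw [Set.disjoint_left]
    rintro p ⟨⟨_, _, h1⟩, _⟩ ⟨⟨_, _, h2⟩, _⟩
    rw [h1] at h2
    simp only [Option.some_inj, Prod.mk.injEq] at h2
    omega
  have hinj : Set.InjOn (fun q => q ++ [((s : ℕ), k)])
      (PS m n (m, 1) (s + 1, k) ∪ PS m n (m, 1) (s, k - 1)) := by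
    intro a _ b _ h
    simpa using h
  rw [F1_eq_finsum_mem, PS_decomp m n s k hs hm hk hn hne,
    finsum_mem_image hinj]
  have : ∀ q, pathWeight x y (q ++ [(s, k)]) = pathWeight x y q * (x s + y k)⁻¹ := by
    intro q; exact pathWeight_append x y q (s, k)
  rw [finsum_mem_congr rfl (fun q _ => this q),
    finsum_mem_mul_const ((PS_finite m n (m,1) (s+1,k)).union (PS_finite m n (m,1) (s,k-1))),
    finsum_mem_union hdisj (PS_finite m n _ _) (PS_finite m n _ _),
    ← F1_eq_finsum_mem, ← F1_eq_finsum_mem]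
  ring

lemma F1_out_row (m n : ℕ) (x y : ℕ → K) (s k : ℕ) (h : m < s) :
    F1 m n x y (m, 1) (s, k) = 0 := by
  rw [F1_eq_finsum_mem, PS_empty_of_not_grid m n _ _ (by simp; omega), finsum_mem_empty]

lemma F1_out_col (m n : ℕ) (x y : ℕ → K) (s : ℕ) :
    F1 m n x y (m, 1) (s, 0) = 0 := by
  rw [F1_eq_finsum_mem, PS_empty_of_not_grid m n _ _ (by simp), finsum_mem_empty]
-- ## Part 2 : F1 equals the explicit recursion G

lemma Icc_insert (t u : ℕ) (h : t ≤ u) :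
    Finset.Icc t u = insert t (Finset.Icc (t+1) u) := by
  ext i; simp; omega

/-- `G m x y k t` : weighted sum over profiles `t = a_k ≤ a_{k-1} ≤ … ≤ a_1 ≤ a_0 = m`,
column `j` (for `1 ≤ j ≤ k`) occupying rows `a_j … a_{j-1}`. -/
def G (m : ℕ) (x y : ℕ → K) : ℕ → ℕ → K
  | 0, t => if t = m then 1 else 0
  | (k+1), t => ∑ u ∈ Finset.Icc t m, G m x y k u * ∏ i ∈ Finset.Icc t u, (x i + y (k+1))⁻¹

lemma G_zero_of_gt (m : ℕ) (x y : ℕ → K) (k t : ℕ) (h : m < t) : G m x y k t = 0 := by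
  cases k with
  | zero => simp [G]; omega
  | succ k => rw [G, Finset.Icc_eq_empty (by omega)]; simp

lemma G_rec (m : ℕ) (x y : ℕ → K) (k t : ℕ) (ht : t ≤ m) :
    G m x y (k+1) t = (x t + y (k+1))⁻¹ * (G m x y k t + G m x y (k+1) (t+1)) := by
  conv_lhs => rw [G, Icc_insert t m ht, Finset.sum_insert (by simp)]
  have h1 : ∏ i ∈ Finset.Icc t t, (x i + y (k+1))⁻¹ = (x t + y (k+1))⁻¹ := by simp
  have h2 : ∀ u ∈ Finset.Icc (t+1) m,
      G m x y k u * ∏ i ∈ Finset.Icc t u, (x i + y (k+1))⁻¹ =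
      (x t + y (k+1))⁻¹ * (G m x y k u * ∏ i ∈ Finset.Icc (t+1) u, (x i + y (k+1))⁻¹) := by
    intro u hu
    simp only [Finset.mem_Icc] at hu
    rw [Icc_insert t u (by omega), Finset.prod_insert (by simp)]
    ring
  rw [Finset.sum_congr rfl h2, ← Finset.mul_sum, h1, ← G]
  ring

lemma F1_eq_G (m n : ℕ) (x y : ℕ → K) (k : ℕ) (hk : 1 ≤ k) (hkn : k ≤ n) :
    ∀ s : ℕ, 1 ≤ s → s ≤ m → F1 m n x y (m, 1) (s, k) = G m x y k s := by
  induction k with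
  | zero => omega
  | succ k ihk =>
    -- downward induction on s
    suffices h : ∀ d s : ℕ, s = m - d → 1 ≤ s → s ≤ m →
        F1 m n x y (m, 1) (s, k+1) = G m x y (k+1) s by
      intro s hs1 hs2; exact h (m - s) s (by omega) hs1 hs2
    intro d
    induction d with
    | zero =>
      intro s hsd hs1 hs2
      have hsm : s = m := by omega
      rw [hsm]
      rcases Nat.eq_or_lt_of_le hk with hk1 | hk2
      · -- k + 1 = 1 : base cell (m,1)
        have hk0 : k = 0 := by omega
        subst hk0
        rw [F1_base m n x y (by omega) (by omega), G_rec m x y 0 m le_rfl,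
          G_zero_of_gt m x y 1 (m+1) (by omega)]
        simp [G]
      · -- k + 1 ≥ 2, s = m
        have hne : ((m:ℕ), k+1) ≠ ((m:ℕ), 1) := by simp; omega
        rw [F1_rec m n x y m (k+1) (by omega) le_rfl (by omega) hkn hne,
          F1_out_row m n x y (m+1) (k+1) (by omega),
          G_rec m x y k m le_rfl, G_zero_of_gt m x y (k+1) (m+1) (by omega)]
        have : k + 1 - 1 = k := by omega
        rw [this, ihk (by omega) (by omega) m (by omega) le_rfl]
        ring
    | succ d ihd =>
      intro s hsd hs1 hs2
      by_cases hsm : s = m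
      · exact ihd s (by omega) hs1 hs2
      have hslt : s < m := by omega
      have hne : ((s:ℕ), k+1) ≠ ((m:ℕ), 1) := by simp; omega
      rw [F1_rec m n x y s (k+1) hs1 hs2 (by omega) hkn hne,
        G_rec m x y k s (by omega),
        ihd (s+1) (by omega) (by omega) (by omega)]
      have : k + 1 - 1 = k := by omega
      rw [this]
      rcases Nat.eq_or_lt_of_le hk with hk1 | hk2
      · have hk0 : k = 0 := by omega
        subst hk0
        rw [F1_out_col m n x y s]
        have hg0 : G m x y 0 s = 0 := by simp only [G]; rw [if_neg hsm]
        rw [hg0]; ring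
      · rw [ihk (by omega) (by omega) s hs1 hs2]
        ring
-- ## Part 3 : symmetry of G

lemma telescope (f : ℕ → K) (s v : ℕ) (h : s ≤ v) :
    ∑ t ∈ Finset.Icc s v, (f t - f (t + 1)) = f s - f (v + 1) := by
  induction v, h using Nat.le_induction with
  | base => simp
  | succ v hv ih =>
    rw [show Finset.Icc s (v+1) = insert (v+1) (Finset.Icc s v) by ext i; simp; omega,
      Finset.sum_insert (by simp), ih]
    ring

set_option maxHeartbeats 2000000 in
lemma H_symm (x : ℕ → K) (a b : K) (ha : ∀ i, x i + a ≠ 0) (hb : ∀ i, x i + b ≠ 0)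
    (hab : a ≠ b) (s v : ℕ) (hs : 1 ≤ s) :
    ∑ t ∈ Finset.Icc s v, (∏ i ∈ Finset.Icc t v, (x i + a)⁻¹) * ∏ i ∈ Finset.Icc s t, (x i + b)⁻¹
      = ∑ t ∈ Finset.Icc s v,
        (∏ i ∈ Finset.Icc t v, (x i + b)⁻¹) * ∏ i ∈ Finset.Icc s t, (x i + a)⁻¹ := by
  rcases le_or_gt s v with hsv | hsv
  · -- telescoping identity, for each ordering of (a,b)
    have key : ∀ a b : K, (∀ i, x i + a ≠ 0) → (∀ i, x i + b ≠ 0) →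
        (b - a) * ∑ t ∈ Finset.Icc s v,
            (∏ i ∈ Finset.Icc t v, (x i + a)⁻¹) * ∏ i ∈ Finset.Icc s t, (x i + b)⁻¹
          = (∏ i ∈ Finset.Icc s v, (x i + a)⁻¹) - ∏ i ∈ Finset.Icc s v, (x i + b)⁻¹ := by
      intro a b ha hb
      set P : ℕ → K := fun t =>
        (∏ i ∈ Finset.Icc t v, (x i + a)⁻¹) * ∏ i ∈ Finset.Icc s (t - 1), (x i + b)⁻¹ with hP
      have hterm : ∀ t ∈ Finset.Icc s v,
          (b - a) * ((∏ i ∈ Finset.Icc t v, (x i + a)⁻¹) * ∏ i ∈ Finset.Icc s t, (x i + b)⁻¹)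
            = P t - P (t + 1) := by
        intro t ht
        simp only [Finset.mem_Icc] at ht
        have h1 : Finset.Icc t v = insert t (Finset.Icc (t+1) v) := by
          ext i; simp only [Finset.mem_Icc, Finset.mem_insert]; omega
        have h2 : Finset.Icc s t = insert t (Finset.Icc s (t-1)) := by
          ext i; simp only [Finset.mem_Icc, Finset.mem_insert]; omega
        have h3 : t + 1 - 1 = t := by omega
        simp only [hP, h3]
        rw [h1, Finset.prod_insert (by simp only [Finset.mem_Icc]; omega),
          h2, Finset.prod_insert (by simp only [Finset.mem_Icc]; omega)]
        set α := x t + a with hα'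
        set β := x t + b with hβ'
        set A1 := ∏ i ∈ Finset.Icc (t+1) v, (x i + a)⁻¹
        set B1 := ∏ i ∈ Finset.Icc s (t-1), (x i + b)⁻¹
        have hαne : α ≠ 0 := ha t
        have hβne : β ≠ 0 := hb t
        have key2 : (b - a) * (α⁻¹ * β⁻¹) = α⁻¹ - β⁻¹ := by
          have hba' : b - a = β - α := by rw [hα', hβ']; ring
          have h4 : β * (α⁻¹ * β⁻¹) = α⁻¹ := by
            rw [mul_comm α⁻¹ β⁻¹, ← mul_assoc, mul_inv_cancel₀ hβne, one_mul]
          have h5 : α * (α⁻¹ * β⁻¹) = β⁻¹ := by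
            rw [← mul_assoc, mul_inv_cancel₀ hαne, one_mul]
          rw [hba', sub_mul, h4, h5]
        calc (b - a) * (α⁻¹ * A1 * (β⁻¹ * B1))
            = (b - a) * (α⁻¹ * β⁻¹) * (A1 * B1) := by ring
          _ = (α⁻¹ - β⁻¹) * (A1 * B1) := by rw [key2]
          _ = α⁻¹ * A1 * B1 - A1 * (β⁻¹ * B1) := by ring
      rw [Finset.mul_sum, Finset.sum_congr rfl hterm, telescope P s v hsv]
      have e1 : Finset.Icc s (s - 1) = (∅ : Finset ℕ) := Finset.Icc_eq_empty (by omega)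
      have e2 : Finset.Icc (v + 1) v = (∅ : Finset ℕ) := Finset.Icc_eq_empty (by omega)
      have e3 : v + 1 - 1 = v := by omega
      simp only [hP, e1, e2, e3, Finset.prod_empty, mul_one, one_mul]
    have h1 := key a b ha hb
    have h2 := key b a hb ha
    have hba : b - a ≠ 0 := sub_ne_zero.2 (Ne.symm hab)
    apply mul_left_cancel₀ hba
    rw [h1]
    have : (b - a) * ∑ t ∈ Finset.Icc s v,
        (∏ i ∈ Finset.Icc t v, (x i + b)⁻¹) * ∏ i ∈ Finset.Icc s t, (x i + a)⁻¹
        = -((a - b) * ∑ t ∈ Finset.Icc s v,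
        (∏ i ∈ Finset.Icc t v, (x i + b)⁻¹) * ∏ i ∈ Finset.Icc s t, (x i + a)⁻¹) := by ring
    rw [this, h2]
    ring
  · rw [Finset.Icc_eq_empty (by omega : ¬ s ≤ v)]
    simp

lemma sum_triangle (t m : ℕ) (F : ℕ → ℕ → K) :
    ∑ u ∈ Finset.Icc t m, ∑ v ∈ Finset.Icc u m, F u v
      = ∑ v ∈ Finset.Icc t m, ∑ u ∈ Finset.Icc t v, F u v := by
  have L : ∑ u ∈ Finset.Icc t m, ∑ v ∈ Finset.Icc u m, F u v
      = ∑ u ∈ Finset.Icc t m, ∑ v ∈ Finset.Icc t m, if u ≤ v then F u v else 0 := by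
    apply Finset.sum_congr rfl
    intro u hu
    simp only [Finset.mem_Icc] at hu
    rw [show Finset.Icc u m = (Finset.Icc t m).filter (fun v => u ≤ v) by
      ext i; simp [Finset.mem_filter]; omega]
    rw [Finset.sum_filter]
  have R : ∑ v ∈ Finset.Icc t m, ∑ u ∈ Finset.Icc t v, F u v
      = ∑ v ∈ Finset.Icc t m, ∑ u ∈ Finset.Icc t m, if u ≤ v then F u v else 0 := by
    apply Finset.sum_congr rfl
    intro v hv
    simp only [Finset.mem_Icc] at hv
    rw [show Finset.Icc t v = (Finset.Icc t m).filter (fun u => u ≤ v) by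
      ext i; simp [Finset.mem_filter]; omega]
    rw [Finset.sum_filter]
  rw [L, R, Finset.sum_comm]

lemma G_congr (m : ℕ) (x : ℕ → K) (y1 y2 : ℕ → K) :
    ∀ k t : ℕ, (∀ i, 1 ≤ i → i ≤ k → y1 i = y2 i) → G m x y1 k t = G m x y2 k t := by
  intro k
  induction k with
  | zero => intro t _; rfl
  | succ k ih =>
    intro t h
    rw [G, G]
    apply Finset.sum_congr rfl
    intro u _
    rw [ih u (fun i h1 h2 => h i h1 (by omega)), h (k+1) (by omega) le_rfl]

set_option maxHeartbeats 2000000 in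
lemma G_swap (m : ℕ) (x y : ℕ → K) (hx : ∀ i j, x i + y j ≠ 0) (j : ℕ) (hj : 1 ≤ j)
    (hab : y j ≠ y (j + 1)) :
    ∀ k, j + 1 ≤ k → ∀ t, 1 ≤ t →
      G m x (y ∘ Equiv.swap j (j + 1)) k t = G m x y k t := by
  intro k
  induction k with
  | zero => omega
  | succ k ih =>
    intro hjk t ht
    rcases Nat.lt_or_ge (j + 1) (k + 1) with hlt | hge
    · -- swap does not touch column k+1
      rw [G, G]
      apply Finset.sum_congr rfl
      intro u hu
      simp only [Finset.mem_Icc] at hu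
      rw [ih (by omega) u (by omega)]
      have : (y ∘ Equiv.swap j (j+1)) (k+1) = y (k+1) := by
        simp only [Function.comp_apply]
        rw [Equiv.swap_apply_of_ne_of_ne (by omega) (by omega)]
      rw [this]
    · -- j = k : the interesting case
      have hjeq : j = k := by omega
      subst hjeq
      obtain ⟨k', rfl⟩ : ∃ k', j = k' + 1 := ⟨j - 1, by omega⟩
      set σ := Equiv.swap (k'+1) (k'+2) with hσ
      have hy1 : (y ∘ σ) (k'+1) = y (k'+2) := by
        simp only [Function.comp_apply, hσ, Equiv.swap_apply_left]
      have hy2 : (y ∘ σ) (k'+2) = y (k'+1) := by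
        simp only [Function.comp_apply, hσ, Equiv.swap_apply_right]
      have hcongr : ∀ v, G m x (y ∘ σ) k' v = G m x y k' v := by
        intro v
        apply G_congr
        intro i h1 h2
        simp only [Function.comp_apply, hσ]
        rw [Equiv.swap_apply_of_ne_of_ne (by omega) (by omega)]
      -- expand both sides two levels
      have expand : ∀ z : ℕ → K, G m x z (k'+1+1) t =
          ∑ v ∈ Finset.Icc t m, G m x z k' v *
            ∑ u ∈ Finset.Icc t v, (∏ i ∈ Finset.Icc u v, (x i + z (k'+1))⁻¹) *
              ∏ i ∈ Finset.Icc t u, (x i + z (k'+2))⁻¹ := by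
        intro z
        rw [G]
        have inner : ∀ u, G m x z (k'+1) u
            = ∑ v ∈ Finset.Icc u m, G m x z k' v * ∏ i ∈ Finset.Icc u v, (x i + z (k'+1))⁻¹ :=
          fun u => by rw [G]
        rw [Finset.sum_congr rfl (fun u _ => by rw [inner u, Finset.sum_mul])]
        rw [sum_triangle t m (fun u v => G m x z k' v * (∏ i ∈ Finset.Icc u v, (x i + z (k'+1))⁻¹)
          * ∏ i ∈ Finset.Icc t u, (x i + z (k'+1+1))⁻¹)]
        apply Finset.sum_congr rfl
        intro v _
        rw [Finset.mul_sum]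
        apply Finset.sum_congr rfl
        intro u _
        ring
      rw [expand (y ∘ σ), expand y]
      apply Finset.sum_congr rfl
      intro v hv
      rw [hcongr v, hy1, hy2]
      congr 1
      exact H_symm x (y (k'+2)) (y (k'+1)) (fun i => hx i _) (fun i => hx i _)
        (Ne.symm hab) t v ht
-- ## Part 4 : from adjacent transpositions to all permutations

/-- adjacent transpositions inside `{1, …, k}` -/
def T (k : ℕ) : Set (Equiv.Perm ℕ) :=
  {e | ∃ j, 1 ≤ j ∧ j + 1 ≤ k ∧ e = Equiv.swap j (j + 1)}

lemma T_mono {k k' : ℕ} (h : k ≤ k') : T k ⊆ T k' := by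
  rintro e ⟨j, h1, h2, rfl⟩
  exact ⟨j, h1, by omega, rfl⟩

lemma swap_mem_closure (t : ℕ) (ht : 1 ≤ t) :
    ∀ u, t < u → Equiv.swap t u ∈ Subgroup.closure (T u) := by
  intro u
  induction u with
  | zero => omega
  | succ u ihu =>
    intro htu
    rcases Nat.lt_or_ge t u with hlt | hge
    · -- swap t (u+1) = swap u (u+1) * swap t u * swap u (u+1)
      have hid : Equiv.swap t (u+1)
          = Equiv.swap u (u+1) * Equiv.swap t u * Equiv.swap u (u+1) := by
        rw [Equiv.swap_mul_swap_mul_swap (by omega : t ≠ u) (by omega : t ≠ u + 1)]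
        exact (Equiv.swap_comm _ _)
      rw [hid]
      have hadj : Equiv.swap u (u+1) ∈ Subgroup.closure (T (u+1)) :=
        Subgroup.subset_closure ⟨u, by omega, le_rfl, rfl⟩
      have hrec : Equiv.swap t u ∈ Subgroup.closure (T (u+1)) :=
        Subgroup.closure_mono (T_mono (by omega)) (ihu hlt)
      exact mul_mem (mul_mem hadj hrec) hadj
    · have : u = t := by omega
      subst this
      exact Subgroup.subset_closure ⟨u, by omega, le_rfl, rfl⟩

lemma perm_mem_closure : ∀ k : ℕ, ∀ σ : Equiv.Perm ℕ,
    (∀ i, i ∉ Finset.Icc 1 k → σ i = i) → σ ∈ Subgroup.closure (T k) := by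
  intro k
  induction k with
  | zero =>
    intro σ hσ
    have : σ = 1 := by
      apply Equiv.ext
      intro i
      exact hσ i (by simp)
    rw [this]; exact one_mem _
  | succ k ihk =>
    intro σ hσ
    by_cases h : σ (k+1) = k+1
    · have : σ ∈ Subgroup.closure (T k) := by
        apply ihk
        intro i hi
        by_cases hik : i = k+1
        · rw [hik]; exact h
        · exact hσ i (by simp only [Finset.mem_Icc] at hi ⊢; omega)
      exact Subgroup.closure_mono (T_mono (by omega)) this
    · set t := σ (k+1) with htdef
      have htIcc : t ∈ Finset.Icc 1 (k+1) := by
        by_contra hmem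
        have := hσ t hmem
        have := σ.injective this
        simp only [Finset.mem_Icc] at hmem
        omega
      have ht1 : 1 ≤ t := by simp only [Finset.mem_Icc] at htIcc; omega
      have htk : t ≤ k := by
        have hne : t ≠ k + 1 := fun he => h (htdef.symm.trans he)
        simp only [Finset.mem_Icc] at htIcc
        omega
      set σ' := Equiv.swap t (k+1) * σ with hσ'
      have hfix : ∀ i, i ∉ Finset.Icc 1 k → σ' i = i := by
        intro i hi
        by_cases hik : i = k+1
        · subst hik
          simp only [hσ', Equiv.Perm.mul_apply, ← htdef, Equiv.swap_apply_left]
        · have hi' : i ∉ Finset.Icc 1 (k+1) := by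
            simp only [Finset.mem_Icc] at hi ⊢; omega
          simp only [hσ', Equiv.Perm.mul_apply, hσ i hi']
          apply Equiv.swap_apply_of_ne_of_ne
          · simp only [Finset.mem_Icc] at hi; omega
          · omega
      have h1 : σ' ∈ Subgroup.closure (T (k+1)) :=
        Subgroup.closure_mono (T_mono (by omega)) (ihk σ' hfix)
      have h2 : Equiv.swap t (k+1) ∈ Subgroup.closure (T (k+1)) :=
        swap_mem_closure t ht1 (k+1) (by omega)
      have : σ = Equiv.swap t (k+1) * σ' := by
        rw [hσ', ← mul_assoc, Equiv.swap_mul_self, one_mul]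
      rw [this]
      exact mul_mem h2 h1
-- ## Part 5 : assembly

lemma G_perm (m : ℕ) (x : ℕ → K) (k : ℕ) {σ : Equiv.Perm ℕ}
    (hσ : σ ∈ Subgroup.closure (T k)) :
    ∀ y : ℕ → K, Function.Injective y → (∀ i j, x i + y j ≠ 0) → ∀ t, 1 ≤ t →
      G m x (y ∘ σ) k t = G m x y k t := by
  induction hσ using Subgroup.closure_induction with
  | mem e he =>
    obtain ⟨j, hj1, hjk, rfl⟩ := he
    intro y hy hx t ht
    exact G_swap m x y hx j hj1 (fun h => absurd (hy h) (by omega)) k hjk t ht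
  | one =>
    intro y _ _ t _
    have : y ∘ ⇑(1 : Equiv.Perm ℕ) = y := by funext i; rfl
    rw [this]
  | mul a b ha hb pa pb =>
    intro y hy hx t ht
    have e1 : y ∘ ⇑(a * b) = (y ∘ ⇑a) ∘ ⇑b := by funext i; rfl
    rw [e1, pb (y ∘ ⇑a) (hy.comp a.injective) (fun i j => hx i (a j)) t ht,
      pa y hy hx t ht]
  | inv a ha pa =>
    intro y hy hx t ht
    have e1 : (y ∘ ⇑a⁻¹) ∘ ⇑a = y := by
      funext i; simp [Function.comp_apply]
    have := pa (y ∘ ⇑a⁻¹) (hy.comp a⁻¹.injective) (fun i j => hx i (a⁻¹ j)) t ht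
    rw [e1] at this
    exact this.symm

lemma Y_injective : Function.Injective Y := by
  intro i j h
  have h1 : Function.Injective (algebraMap (MvPolynomial (ℕ ⊕ ℕ) ℚ) K) :=
    IsFractionRing.injective _ _
  have h2 := h1 h
  have h3 := MvPolynomial.X_injective h2
  exact Sum.inr_injective h3

lemma XY_ne_zero (i j : ℕ) : X i + Y j ≠ 0 := by
  have hpoly : (MvPolynomial.X (Sum.inl i) + MvPolynomial.X (Sum.inr j) :
      MvPolynomial (ℕ ⊕ ℕ) ℚ) ≠ 0 := by
    intro h
    have := congrArg (MvPolynomial.eval (fun _ => (1 : ℚ))) h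
    simp at this
  have h1 : Function.Injective (algebraMap (MvPolynomial (ℕ ⊕ ℕ) ℚ) K) :=
    IsFractionRing.injective _ _
  have : X i + Y j = algebraMap (MvPolynomial (ℕ ⊕ ℕ) ℚ) K
      (MvPolynomial.X (Sum.inl i) + MvPolynomial.X (Sum.inr j)) := by
    rw [map_add]; rfl
  rw [this]
  exact fun h => hpoly (h1 (by rw [h, map_zero]))


/-- The weighted sum `F_{s,k}` over Up-Right lattice paths from `(m,1)` to `(s,k)` in the
grid `{1,…,m} × {1,…,n}` is a symmetric function of the variables `y_1, y_2, …, y_k`: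
it is unchanged under any permutation of the variable indices fixing everything outside
`{1,…,k}`. -/
theorem stmt9 (m n s k : ℕ) (hs : 1 ≤ s) (hsm : s ≤ m) (hk : 1 ≤ k) (hkn : k ≤ n)
    (τ : Equiv.Perm ℕ) (hτ : ∀ j, j ∉ Finset.Icc 1 k → τ j = j) :
    F1 m n X (fun j => Y (τ j)) (m, 1) (s, k) = F1 m n X Y (m, 1) (s, k) := by
  have hmem := perm_mem_closure k τ hτ
  have h1 : F1 m n X (fun j => Y (τ j)) (m, 1) (s, k) = G m X (Y ∘ ⇑τ) k s :=
    F1_eq_G m n X (Y ∘ ⇑τ) k hk hkn s hs hsm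
  have h2 : F1 m n X Y (m, 1) (s, k) = G m X Y k s :=
    F1_eq_G m n X Y k hk hkn s hs hsm
  rw [h1, h2]
  exact G_perm m X k hmem Y Y_injective (fun i j => XY_ne_zero i j) s hs
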